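/- Expansion Lemma (abstract correctability form): Let 'correctable' be a predicate on subsets of qubits of a commuting projector code satisfying the Disentangling Lemma: whenever M and ∂₊M are correctable, there is a unitary U on ∂M such that every code vector ψ satisfies U ψ = φ_M ⊗ ψ'_{M^c} with φ_M independent of ψ. Then if M and A are correctable with ∂M ⊆ A, the set M ∪ A is correctable, where correctability of a set X means: the reduced state of any code vector on X, after erasure, determines no information (formally: erasure of X admits a recovery channel). -/

import Mathlib

open Matrix

/-- An operator on `n` qubits is supported on a set `M` of qubits if it acts as the
identity on the qubits outside `M`. -/
def SupportedOn {n : ℕ} (M : Set (Fin n))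
    (O : Matrix (Fin n → Fin 2) (Fin n → Fin 2) ℂ) : Prop :=
  (∀ f g, (∃ i ∉ M, f i ≠ g i) → O f g = 0) ∧
  (∀ f g f' g', (∀ i ∈ M, f i = f' i) → (∀ i ∈ M, g i = g' i) →
    (∀ i ∉ M, f i = g i) → (∀ i ∉ M, f' i = g' i) → O f g = O f' g')

/-- Erasure-correctability of a set of qubits, in the Knill–Laflamme algebraic form:
every operator supported on the set acts as a scalar within the code space. -/
def Correctable {n : ℕ} (Q : Matrix (Fin n → Fin 2) (Fin n → Fin 2) ℂ)
    (X : Set (Fin n)) : Prop :=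
  ∀ O, SupportedOn X O → ∃ c : ℂ, Q * O * Q = c • Q

lemma suppMono {n : ℕ} {X Y : Set (Fin n)} (hXY : X ⊆ Y)
    {O : Matrix (Fin n → Fin 2) (Fin n → Fin 2) ℂ} (hO : SupportedOn X O) :
    SupportedOn Y O := by
  constructor
  · rintro f g ⟨i, hi, hne⟩
    exact hO.1 f g ⟨i, fun h => hi (hXY h), hne⟩
  · intro f g f' g' hf hg hfg hfg'
    by_cases hoff : ∀ i ∉ X, f i = g i
    · refine hO.2 f g f' g' (fun i hi => hf i (hXY hi)) (fun i hi => hg i (hXY hi)) hoff ?_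
      intro i hi
      by_cases hiY : i ∈ Y
      · rw [← hf i hiY, ← hg i hiY]; exact hoff i hi
      · exact hfg' i hiY
    · push_neg at hoff
      obtain ⟨i, hiX, hne⟩ := hoff
      have hne' : f' i ≠ g' i := by
        by_cases hiY : i ∈ Y
        · rw [← hf i hiY, ← hg i hiY]; exact hne
        · exact absurd (hfg i hiY) hne
      rw [hO.1 f g ⟨i, hiX, hne⟩, hO.1 f' g' ⟨i, hiX, hne'⟩]

lemma suppCT {n : ℕ} {X : Set (Fin n)} {O : Matrix (Fin n → Fin 2) (Fin n → Fin 2) ℂ}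
    (hO : SupportedOn X O) : SupportedOn X Oᴴ := by
  constructor
  · rintro f g ⟨i, hi, hne⟩
    rw [Matrix.conjTranspose_apply, hO.1 g f ⟨i, hi, hne.symm⟩, star_zero]
  · intro f g f' g' hf hg hfg hfg'
    rw [Matrix.conjTranspose_apply, Matrix.conjTranspose_apply,
      hO.2 g f g' f' hg hf (fun i hi => (hfg i hi).symm) (fun i hi => (hfg' i hi).symm)]

lemma suppMul {n : ℕ} {S : Set (Fin n)} {P R : Matrix (Fin n → Fin 2) (Fin n → Fin 2) ℂ}
    (hP : SupportedOn S P) (hR : SupportedOn S R) :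
    SupportedOn S (P * R) := by
  classical
  constructor
  · rintro f g ⟨i, hi, hne⟩
    rw [Matrix.mul_apply]
    refine Finset.sum_eq_zero fun h _ => ?_
    by_cases hh : h i = f i
    · rw [hR.1 h g ⟨i, hi, hh ▸ hne⟩, mul_zero]
    · rw [hP.1 f h ⟨i, hi, fun e => hh e.symm⟩, zero_mul]
  · intro f g f' g' hf hg hfg hfg'
    rw [Matrix.mul_apply, Matrix.mul_apply]
    set σ : (Fin n → Fin 2) → (Fin n → Fin 2) :=
      fun h i => if i ∈ S then h i else f' i + (h i - f i) with hσdef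
    set τ : (Fin n → Fin 2) → (Fin n → Fin 2) :=
      fun h i => if i ∈ S then h i else f i + (h i - f' i) with hτdef
    have hστ : ∀ h, τ (σ h) = h := by
      intro h; funext i
      by_cases hi : i ∈ S <;> simp only [hσdef, hτdef, hi, if_pos, if_neg, if_true, if_false]
      · open Fin.CommRing in ring
    have hτσ : ∀ h, σ (τ h) = h := by
      intro h; funext i
      by_cases hi : i ∈ S <;> simp only [hσdef, hτdef, hi, if_pos, if_neg, if_true, if_false]
      · open Fin.CommRing in ring
    refine Fintype.sum_equiv ⟨σ, τ, hστ, hτσ⟩ _ _ ?_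
    intro h
    simp only [Equiv.coe_fn_mk]
    by_cases hcase : ∀ i ∉ S, h i = f i
    · have h1 : ∀ i ∈ S, σ h i = h i := fun i hi => if_pos hi
      have h2 : ∀ i ∉ S, σ h i = f' i := by
        intro i hi
        simp only [hσdef, if_neg hi, hcase i hi]; open Fin.CommRing in ring
      rw [hP.2 f h f' (σ h) hf (fun i hi => (h1 i hi).symm) (fun i hi => (hcase i hi).symm)
          (fun i hi => (h2 i hi).symm),
        hR.2 h g (σ h) g' (fun i hi => (h1 i hi).symm) hg
          (fun i hi => (hcase i hi).trans (hfg i hi))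
          (fun i hi => (h2 i hi).trans (hfg' i hi))]
    · push_neg at hcase
      obtain ⟨i, hi, hne⟩ := hcase
      have hσne : σ h i ≠ f' i := by
        simp only [hσdef, if_neg hi]
        intro e
        have e0 : h i - f i = 0 := by
          have := e.trans (add_zero (f' i)).symm
          exact add_left_cancel this
        exact hne (sub_eq_zero.mp e0)
      rw [hP.1 f h ⟨i, hi, fun e => hne e.symm⟩, hP.1 f' (σ h) ⟨i, hi, fun e => hσne e.symm⟩,
        zero_mul, zero_mul]

noncomputable def Bform {n : ℕ} (u v : (Fin n → Fin 2) → ℂ)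
    (N : Matrix (Fin n → Fin 2) (Fin n → Fin 2) ℂ) : ℂ :=
  ∑ f, ∑ g, (starRingEnd ℂ) (u f) * N f g * v g

lemma Bform_dot {n : ℕ} (u v : (Fin n → Fin 2) → ℂ)
    (N : Matrix (Fin n → Fin 2) (Fin n → Fin 2) ℂ) :
    Bform u v N = star u ⬝ᵥ (N *ᵥ v) := by
  simp only [Bform, dotProduct, Pi.star_apply, Matrix.mulVec, Finset.mul_sum]
  exact Finset.sum_congr rfl fun f _ => Finset.sum_congr rfl fun g _ => by
    rw [starRingEnd_apply, mul_assoc]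

lemma Bform_conj {n : ℕ} (U N : Matrix (Fin n → Fin 2) (Fin n → Fin 2) ℂ)
    (u v : (Fin n → Fin 2) → ℂ) :
    Bform (U *ᵥ u) (U *ᵥ v) N = Bform u v (Uᴴ * N * U) := by
  rw [Bform_dot, Bform_dot, Matrix.star_mulVec, Matrix.mulVec_mulVec,
    Matrix.dotProduct_mulVec, Matrix.vecMul_vecMul, Matrix.mul_assoc,
    Matrix.dotProduct_mulVec]

lemma Bform_sandwich {n : ℕ} (Q N : Matrix (Fin n → Fin 2) (Fin n → Fin 2) ℂ)
    (hherm : Qᴴ = Q) (x y : Fin n → Fin 2) :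
    (Q * N * Q) x y = Bform (fun a => Q a x) (fun a => Q a y) N := by
  rw [Bform_dot]
  have h1 : star (fun a => Q a x) = fun a => Q x a := by
    funext a
    rw [Pi.star_apply]
    conv_rhs => rw [← hherm]
    rw [Matrix.conjTranspose_apply]
  have h2 : (N *ᵥ fun a => Q a y) = fun f => (N * Q) f y := by
    funext f
    simp [Matrix.mulVec, dotProduct, Matrix.mul_apply]
  rw [h1, h2, Matrix.mul_assoc, Matrix.mul_apply]
  rfl

open Classical in
noncomputable def glue {n : ℕ} (M : Set (Fin n)) (a : ↥M → Fin 2) (c : ↥(Mᶜ) → Fin 2) :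
    Fin n → Fin 2 := fun i => if h : i ∈ M then a ⟨i, h⟩ else c ⟨i, h⟩

open Classical in
lemma glue_resM {n : ℕ} (M : Set (Fin n)) (a : ↥M → Fin 2) (c : ↥(Mᶜ) → Fin 2) :
    (fun i : ↥M => glue M a c i.val) = a := by
  funext i; simp [glue, i.2]

open Classical in
lemma glue_resC {n : ℕ} (M : Set (Fin n)) (a : ↥M → Fin 2) (c : ↥(Mᶜ) → Fin 2) :
    (fun i : ↥(Mᶜ) => glue M a c i.val) = c := by
  funext i
  have h : ¬ (i.val ∈ M) := i.2
  simp [glue, h]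

open Classical in
noncomputable def gluEquiv {n : ℕ} (M : Set (Fin n)) :
    (Fin n → Fin 2) ≃ ((↥M → Fin 2) × (↥(Mᶜ) → Fin 2)) where
  toFun f := (fun i => f i.val, fun i => f i.val)
  invFun p := glue M p.1 p.2
  left_inv f := by
    funext i; by_cases h : i ∈ M <;> simp [glue, h]
  right_inv p := by
    refine Prod.ext ?_ ?_
    · exact glue_resM M p.1 p.2
    · exact glue_resC M p.1 p.2

open Classical in
lemma sum_glue {n : ℕ} (M : Set (Fin n)) (F : (Fin n → Fin 2) → ℂ) :
    ∑ f, F f = ∑ a, ∑ c, F (glue M a c) := by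
  rw [← Equiv.sum_comp (gluEquiv M).symm F, Fintype.sum_prod_type]
  rfl

open Classical in
noncomputable def tilde {n : ℕ} (M : Set (Fin n)) (φ : (↥M → Fin 2) → ℂ)
    (O' : Matrix (Fin n → Fin 2) (Fin n → Fin 2) ℂ) :
    Matrix (Fin n → Fin 2) (Fin n → Fin 2) ℂ :=
  fun f g => (if ∀ i ∈ M, f i = g i then (1 : ℂ) else 0) *
    ∑ a, ∑ b, (starRingEnd ℂ) (φ a) *
      O' (glue M a (fun i => f i.val)) (glue M b (fun i => g i.val)) * φ b

open Classical in
lemma tilde_supported {n : ℕ} {M A : Set (Fin n)} (φ : (↥M → Fin 2) → ℂ)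
    {O' : Matrix (Fin n → Fin 2) (Fin n → Fin 2) ℂ}
    (hO' : SupportedOn (M ∪ A) O') : SupportedOn A (tilde M φ O') := by
  constructor
  · rintro f g ⟨i, hiA, hne⟩
    by_cases hiM : i ∈ M
    · rw [tilde, if_neg (fun h => hne (h i hiM)), zero_mul]
    · have hiMA : i ∉ M ∪ A := by rintro (h | h); exacts [hiM h, hiA h]
      rw [tilde]
      have : (∑ a, ∑ b, (starRingEnd ℂ) (φ a) *
          O' (glue M a (fun i => f i.val)) (glue M b (fun i => g i.val)) * φ b) = 0 := by
        refine Finset.sum_eq_zero fun a _ => Finset.sum_eq_zero fun b _ => ?_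
        have : O' (glue M a (fun i => f i.val)) (glue M b (fun i => g i.val)) = 0 := by
          refine hO'.1 _ _ ⟨i, hiMA, ?_⟩
          simp only [glue, dif_neg hiM]
          exact hne
        rw [this, mul_zero, zero_mul]
      rw [this, mul_zero]
  · intro f g f' g' hf hg hfg hfg'
    rw [tilde, tilde]
    have hiff : (∀ i ∈ M, f i = g i) ↔ (∀ i ∈ M, f' i = g' i) := by
      constructor
      · intro H i hiM
        by_cases hiA : i ∈ A
        · rw [← hf i hiA, ← hg i hiA]; exact H i hiM
        · exact hfg' i hiA
      · intro H i hiM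
        by_cases hiA : i ∈ A
        · rw [hf i hiA, hg i hiA]; exact H i hiM
        · exact hfg i hiA
    have hsum : (∑ a, ∑ b, (starRingEnd ℂ) (φ a) *
          O' (glue M a (fun i => f i.val)) (glue M b (fun i => g i.val)) * φ b) =
        (∑ a, ∑ b, (starRingEnd ℂ) (φ a) *
          O' (glue M a (fun i => f' i.val)) (glue M b (fun i => g' i.val)) * φ b) := by
      refine Finset.sum_congr rfl fun a _ => Finset.sum_congr rfl fun b _ => ?_
      have : O' (glue M a (fun i => f i.val)) (glue M b (fun i => g i.val)) =
          O' (glue M a (fun i => f' i.val)) (glue M b (fun i => g' i.val)) := by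
        refine hO'.2 _ _ _ _ ?_ ?_ ?_ ?_
        · intro i hi
          by_cases hiM : i ∈ M
          · simp [glue, hiM]
          · have hiA : i ∈ A := hi.resolve_left hiM
            simp [glue, hiM, hf i hiA]
        · intro i hi
          by_cases hiM : i ∈ M
          · simp [glue, hiM]
          · have hiA : i ∈ A := hi.resolve_left hiM
            simp [glue, hiM, hg i hiA]
        · intro i hi
          have hiM : i ∉ M := fun h => hi (Or.inl h)
          have hiA : i ∉ A := fun h => hi (Or.inr h)
          simp [glue, hiM, hfg i hiA]
        · intro i hi
          have hiM : i ∉ M := fun h => hi (Or.inl h)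
          have hiA : i ∉ A := fun h => hi (Or.inr h)
          simp [glue, hiM, hfg' i hiA]
      rw [this]
    rw [hsum, if_congr hiff rfl rfl]

open Classical in
lemma tilde_glue {n : ℕ} (M : Set (Fin n)) (φ : (↥M → Fin 2) → ℂ)
    (O' : Matrix (Fin n → Fin 2) (Fin n → Fin 2) ℂ)
    (a b : ↥M → Fin 2) (c d : ↥(Mᶜ) → Fin 2) :
    tilde M φ O' (glue M a c) (glue M b d) =
      (if a = b then (1 : ℂ) else 0) *
        ∑ p, ∑ q, (starRingEnd ℂ) (φ p) * O' (glue M p c) (glue M q d) * φ q := by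
  rw [tilde]
  have hcond : (∀ i ∈ M, glue M a c i = glue M b d i) ↔ a = b := by
    constructor
    · intro H
      funext i
      have := H i.val i.2
      simpa [glue, i.2] using this
    · rintro rfl i hi
      simp [glue, hi]
  rw [if_congr hcond rfl rfl, glue_resC, glue_resC]

lemma sum_swap13 {α β γ : Type*} [Fintype α] [Fintype β] [Fintype γ]
    (f : α → β → γ → ℂ) :
    ∑ a, ∑ b, ∑ d, f a b d = ∑ d, ∑ a, ∑ b, f a b d :=
  (Finset.sum_congr rfl fun _ _ => Finset.sum_comm).trans Finset.sum_comm

set_option maxHeartbeats 1000000 in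
open Classical in
lemma key_identity {n : ℕ} (M : Set (Fin n)) (φ : (↥M → Fin 2) → ℂ)
    (O' : Matrix (Fin n → Fin 2) (Fin n → Fin 2) ℂ)
    (w₁ w₂ : (Fin n → Fin 2) → ℂ) (ψ₁' ψ₂' : (↥(Mᶜ) → Fin 2) → ℂ)
    (h₁ : ∀ f, w₁ f = φ (fun i => f i.val) * ψ₁' (fun i => f i.val))
    (h₂ : ∀ f, w₂ f = φ (fun i => f i.val) * ψ₂' (fun i => f i.val)) :
    Bform w₁ w₂ (tilde M φ O') =
      (∑ h, (starRingEnd ℂ) (φ h) * φ h) * Bform w₁ w₂ O' := by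
  have Bsplit : ∀ N : Matrix (Fin n → Fin 2) (Fin n → Fin 2) ℂ,
      Bform w₁ w₂ N = ∑ a, ∑ c, ∑ b, ∑ d,
        (starRingEnd ℂ) (φ a) * (starRingEnd ℂ) (ψ₁' c) *
          N (glue M a c) (glue M b d) * (φ b * ψ₂' d) := by
    intro N
    rw [Bform, sum_glue M]
    refine Finset.sum_congr rfl fun a _ => Finset.sum_congr rfl fun c _ => ?_
    rw [sum_glue M]
    refine Finset.sum_congr rfl fun b _ => Finset.sum_congr rfl fun d _ => ?_
    rw [h₁, h₂, glue_resM, glue_resM, glue_resC, glue_resC, _root_.map_mul]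
  set K : ((↥(Mᶜ) → Fin 2)) → ((↥(Mᶜ) → Fin 2)) → ℂ :=
    fun c d => ∑ p, ∑ q, (starRingEnd ℂ) (φ p) * O' (glue M p c) (glue M q d) * φ q with hK
  have hL : Bform w₁ w₂ (tilde M φ O') = ∑ a, ∑ c, ∑ d,
      ((starRingEnd ℂ) (φ a) * φ a) * ((starRingEnd ℂ) (ψ₁' c) * ψ₂' d * K c d) := by
    rw [Bsplit]
    refine Finset.sum_congr rfl fun a _ => Finset.sum_congr rfl fun c _ => ?_
    have step1 : ∀ b, (∑ d, (starRingEnd ℂ) (φ a) * (starRingEnd ℂ) (ψ₁' c) *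
        tilde M φ O' (glue M a c) (glue M b d) * (φ b * ψ₂' d)) =
        (if a = b then (∑ d, ((starRingEnd ℂ) (φ a) * φ a) *
          ((starRingEnd ℂ) (ψ₁' c) * ψ₂' d * K c d)) else 0) := by
      intro b
      by_cases hab : a = b
      · subst hab
        rw [if_pos rfl]
        refine Finset.sum_congr rfl fun d _ => ?_
        rw [tilde_glue, if_pos rfl]
        simp only [hK]
        ring
      · rw [if_neg hab]
        refine Finset.sum_eq_zero fun d _ => ?_
        rw [tilde_glue, if_neg hab]
        ring
    calc (∑ b, ∑ d, (starRingEnd ℂ) (φ a) * (starRingEnd ℂ) (ψ₁' c) *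
        tilde M φ O' (glue M a c) (glue M b d) * (φ b * ψ₂' d))
        = ∑ b, (if a = b then (∑ d, ((starRingEnd ℂ) (φ a) * φ a) *
            ((starRingEnd ℂ) (ψ₁' c) * ψ₂' d * K c d)) else 0) :=
          Finset.sum_congr rfl fun b _ => step1 b
      _ = ∑ d, ((starRingEnd ℂ) (φ a) * φ a) *
            ((starRingEnd ℂ) (ψ₁' c) * ψ₂' d * K c d) := by
          rw [Finset.sum_ite_eq]
          exact if_pos (Finset.mem_univ a)
  have hR : Bform w₁ w₂ O' = ∑ c, ∑ d,
      (starRingEnd ℂ) (ψ₁' c) * ψ₂' d * K c d := by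
    rw [Bsplit, Finset.sum_comm]
    refine Finset.sum_congr rfl fun c _ => ?_
    rw [sum_swap13 (fun a b d => (starRingEnd ℂ) (φ a) * (starRingEnd ℂ) (ψ₁' c) *
      O' (glue M a c) (glue M b d) * (φ b * ψ₂' d))]
    refine Finset.sum_congr rfl fun d _ => ?_
    simp only [hK]
    rw [Finset.mul_sum]
    refine Finset.sum_congr rfl fun p _ => ?_
    rw [Finset.mul_sum]
    refine Finset.sum_congr rfl fun q _ => ?_
    ring
  rw [hL, hR, Finset.sum_mul]
  refine Finset.sum_congr rfl fun a _ => ?_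
  rw [Finset.mul_sum]
  refine Finset.sum_congr rfl fun c _ => ?_
  rw [Finset.mul_sum]

set_option maxHeartbeats 1000000

/-- Expansion Lemma (abstract correctability form): assume the Disentangling Lemma,
i.e. whenever `M` and its external boundary `∂₊M` are correctable there is a unitary
`U` supported on `∂M = ∂₊M ∪ ∂₋M` mapping every code vector `ψ` to a product
`φ_M ⊗ ψ'_{M^c}` across the `M`/`M^c` cut with `φ_M` independent of `ψ`.  Then if `M`
and `A` are correctable with `∂M ⊆ A`, the set `M ∪ A` is correctable. -/
theorem stmt12 (n : ℕ) (Q : Matrix (Fin n → Fin 2) (Fin n → Fin 2) ℂ)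
    (hproj : Q * Q = Q) (hherm : Qᴴ = Q)
    (bdryPlus bdryMinus : Set (Fin n) → Set (Fin n))
    (hdisentangle : ∀ M : Set (Fin n), Correctable Q M → Correctable Q (bdryPlus M) →
      ∃ U : Matrix (Fin n → Fin 2) (Fin n → Fin 2) ℂ,
        Uᴴ * U = 1 ∧ SupportedOn (bdryPlus M ∪ bdryMinus M) U ∧
        ∃ φ : (↥M → Fin 2) → ℂ, ∀ ψ : (Fin n → Fin 2) → ℂ, Q.mulVec ψ = ψ →
          ∃ ψ' : (↥(Mᶜ) → Fin 2) → ℂ, ∀ f : Fin n → Fin 2,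
            U.mulVec ψ f = φ (fun i => f i.val) * ψ' (fun i => f i.val))
    (M A : Set (Fin n)) (hM : Correctable Q M) (hA : Correctable Q A)
    (hbdry : bdryPlus M ∪ bdryMinus M ⊆ A) :
    Correctable Q (M ∪ A) := by
  classical
  by_cases hQ : Q = 0
  · intro O _
    exact ⟨0, by simp [hQ]⟩
  -- boundary is correctable
  have hBp : Correctable Q (bdryPlus M) := by
    intro O hO
    exact hA O (suppMono (Set.Subset.trans Set.subset_union_left hbdry) hO)
  obtain ⟨U, hU, hUsupp, φ, hprod⟩ := hdisentangle M hM hBp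
  have hUA : SupportedOn A U := suppMono hbdry hUsupp
  -- columns of Q are code vectors
  have hcol : ∀ y, Q.mulVec (fun a => Q a y) = fun a => Q a y := by
    intro y
    funext a
    have : (Q * Q) a y = Q a y := by rw [hproj]
    simpa [Matrix.mulVec, dotProduct, Matrix.mul_apply] using this
  -- the norm-squared of φ is nonzero
  have hS : (∑ h, (starRingEnd ℂ) (φ h) * φ h) ≠ 0 := by
    obtain ⟨x0, y0, hxy⟩ : ∃ x y, Q x y ≠ 0 := by
      by_contra h
      push_neg at h
      exact hQ (Matrix.ext fun i j => h i j)
    obtain ⟨ψ', hψ'⟩ := hprod (fun a => Q a y0) (hcol y0)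
    have hUne : U.mulVec (fun a => Q a y0) ≠ 0 := by
      intro h0
      have hz : (fun a => Q a y0) = (0 : (Fin n → Fin 2) → ℂ) := by
        calc (fun a => Q a y0) = (1 : Matrix (Fin n → Fin 2) (Fin n → Fin 2) ℂ) *ᵥ
              (fun a => Q a y0) := (Matrix.one_mulVec _).symm
          _ = (Uᴴ * U) *ᵥ (fun a => Q a y0) := by rw [hU]
          _ = Uᴴ *ᵥ (U *ᵥ (fun a => Q a y0)) := (Matrix.mulVec_mulVec _ _ _).symm
          _ = Uᴴ *ᵥ 0 := by rw [h0]
          _ = 0 := Matrix.mulVec_zero _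
      exact hxy (congrFun hz x0)
    obtain ⟨f0, hf0⟩ := Function.ne_iff.mp hUne
    rw [hψ' f0] at hf0
    have hφne : φ (fun i => f0 i.val) ≠ 0 := left_ne_zero_of_mul hf0
    have heach : ∀ z : ℂ, (starRingEnd ℂ) z * z = ((Complex.normSq z : ℝ) : ℂ) := by
      intro z
      rw [mul_comm, Complex.mul_conj]
    have : (∑ h, (starRingEnd ℂ) (φ h) * φ h) =
        ((∑ h, Complex.normSq (φ h) : ℝ) : ℂ) := by
      rw [Complex.ofReal_sum]
      exact Finset.sum_congr rfl fun h _ => heach (φ h)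
    rw [this]
    refine Complex.ofReal_ne_zero.mpr (ne_of_gt ?_)
    refine Finset.sum_pos' (fun i _ => Complex.normSq_nonneg _)
      ⟨_, Finset.mem_univ (fun i => f0 i.val), Complex.normSq_pos.mpr hφne⟩
  set S : ℂ := ∑ h, (starRingEnd ℂ) (φ h) * φ h with hSdef
  intro O hO
  set O' : Matrix (Fin n → Fin 2) (Fin n → Fin 2) ℂ := U * O * Uᴴ with hO'def
  have hUMA : SupportedOn (M ∪ A) U := suppMono Set.subset_union_right hUA
  have hO'supp : SupportedOn (M ∪ A) O' := suppMul (suppMul hUMA hO) (suppCT hUMA)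
  have htsupp : SupportedOn A (tilde M φ O') := tilde_supported φ hO'supp
  have hback : SupportedOn A (Uᴴ * tilde M φ O' * U) :=
    suppMul (suppMul (suppCT hUA) htsupp) hUA
  obtain ⟨c, hc⟩ := hA _ hback
  refine ⟨c * S⁻¹, ?_⟩
  have hUUt : U * Uᴴ = 1 := mul_eq_one_comm.mp hU
  have hOeq : Uᴴ * O' * U = O := by
    rw [hO'def]
    calc Uᴴ * (U * O * Uᴴ) * U = (Uᴴ * U) * O * (Uᴴ * U) := by
          simp only [Matrix.mul_assoc]
      _ = O := by rw [hU, Matrix.one_mul, Matrix.mul_one]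
  ext x y
  obtain ⟨ψ₁', h₁⟩ := hprod (fun a => Q a x) (hcol x)
  obtain ⟨ψ₂', h₂⟩ := hprod (fun a => Q a y) (hcol y)
  have key := key_identity M φ O' (U *ᵥ (fun a => Q a x)) (U *ᵥ (fun a => Q a y))
    ψ₁' ψ₂' h₁ h₂
  have e1 : (Q * O * Q) x y = Bform (U *ᵥ (fun a => Q a x)) (U *ᵥ (fun a => Q a y)) O' := by
    rw [Bform_sandwich Q O hherm x y, ← hOeq, ← Bform_conj]
  have e2 : Bform (U *ᵥ (fun a => Q a x)) (U *ᵥ (fun a => Q a y)) (tilde M φ O') =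
      c * Q x y := by
    rw [Bform_conj, ← Bform_sandwich Q _ hherm x y, hc]
    simp
  have e3 : (Q * O * Q) x y = S⁻¹ * (c * Q x y) := by
    rw [e1, ← e2]
    rw [key]
    field_simp
    rw [hSdef]
  rw [e3]
  simp [Matrix.smul_apply, smul_eq_mul]
  ring
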